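/- arXiv:quant-ph/0512082 — 2 statements merged into one kernel-verified Lean document; each statement's English description precedes it below -/
import Mathlib

section
/- Even under the promise that |f(x)| ≤ M for all x, function values at finitely many points do not determine the integral: for every n, every choice of points t_1,...,t_n in [0,1] with n ≥ 1, and every M > 0, there exist continuous functions f, g : [0,1] → ℝ with |f(x)| ≤ M and |g(x)| ≤ M for all x, f(t_i) = g(t_i) for all i, and |∫₀¹ f - ∫₀¹ g| ≥ M/2. -/
open MeasureTheory

/-- Weierstrass product inequality. -/
lemma weier {ι : Type*} (s : Finset ι) (a : ι → ℝ) (h0 : ∀ i ∈ s, 0 ≤ a i)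
    (h1 : ∀ i ∈ s, a i ≤ 1) : 1 - ∑ i ∈ s, a i ≤ ∏ i ∈ s, (1 - a i) := by
  classical
  induction s using Finset.induction_on with
  | empty => simp
  | @insert j s' hj ih =>
    rw [Finset.sum_insert hj, Finset.prod_insert hj]
    have h0' : ∀ i ∈ s', 0 ≤ a i := fun i hi => h0 i (Finset.mem_insert_of_mem hi)
    have h1' : ∀ i ∈ s', a i ≤ 1 := fun i hi => h1 i (Finset.mem_insert_of_mem hi)
    have hprod0 : (0:ℝ) ≤ ∏ i ∈ s', (1 - a i) :=
      Finset.prod_nonneg fun i hi => by linarith [h1' i hi]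
    have hprod1 : ∏ i ∈ s', (1 - a i) ≤ 1 :=
      Finset.prod_le_one (fun i hi => by linarith [h1' i hi])
        (fun i hi => by linarith [h0' i hi])
    have := ih h0' h1'
    have haj0 := h0 j (Finset.mem_insert_self j s')
    nlinarith

theorem stmt_1 (n : ℕ) (hn : 1 ≤ n) (t : Fin n → ℝ)
    (ht : ∀ i, t i ∈ Set.Icc (0:ℝ) 1) (M : ℝ) (hM : 0 < M) :
    ∃ f g : ℝ → ℝ,
      ContinuousOn f (Set.Icc (0:ℝ) 1) ∧ ContinuousOn g (Set.Icc (0:ℝ) 1) ∧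
      (∀ x ∈ Set.Icc (0:ℝ) 1, |f x| ≤ M) ∧
      (∀ x ∈ Set.Icc (0:ℝ) 1, |g x| ≤ M) ∧
      (∀ i, f (t i) = g (t i)) ∧
      M / 2 ≤ |(∫ x in (0:ℝ)..1, f x) - ∫ x in (0:ℝ)..1, g x| := by
  classical
  set c : ℝ := 4 * n with hc
  have hn' : (1:ℝ) ≤ n := by exact_mod_cast hn
  have hcpos : (0:ℝ) < c := by positivity
  set p : ℝ → ℝ := fun x => ∏ i : Fin n, min 1 (c * |x - t i|) with hp
  set a : Fin n → ℝ → ℝ := fun i x => max 0 (1 - c * |x - t i|) with ha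
  have hfac : ∀ i x, min 1 (c * |x - t i|) = 1 - a i x := by
    intro i x
    simp only [ha]
    rcases le_total (c * |x - t i|) 1 with h | h
    · rw [min_eq_right h, max_eq_right (by linarith)]; ring
    · rw [min_eq_left h, max_eq_left (by linarith)]; ring
  have hpcont : Continuous p := by
    apply continuous_finset_prod
    intro i _
    exact continuous_const.min (continuous_const.mul ((continuous_id.sub continuous_const).abs))
  have hacont : ∀ i, Continuous (a i) := by
    intro i
    exact continuous_const.max (continuous_const.sub
      (continuous_const.mul ((continuous_id.sub continuous_const).abs)))
  have hp0 : ∀ x, 0 ≤ p x := by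
    intro x
    exact Finset.prod_nonneg fun i _ => le_min zero_le_one (by positivity)
  have hp1 : ∀ x, p x ≤ 1 := by
    intro x
    exact Finset.prod_le_one (fun i _ => le_min zero_le_one (by positivity))
      (fun i _ => min_le_left _ _)
  refine ⟨fun x => M * p x, fun _ => 0, ?_, continuousOn_const, ?_, ?_, ?_, ?_⟩
  · exact (continuous_const.mul hpcont).continuousOn
  · intro x _
    rw [abs_of_nonneg (by positivity)]
    calc M * p x ≤ M * 1 := by nlinarith [hp0 x, hp1 x]
    _ = M := mul_one M
  · intro x _; simp [abs_of_pos hM, hM.le]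
  · intro i
    have : p (t i) = 0 := by
      apply Finset.prod_eq_zero (Finset.mem_univ i)
      simp
    simp [this]
  · have hint0 : (∫ x in (0:ℝ)..1, (0:ℝ)) = 0 := by simp
    rw [hint0, sub_zero]
    have key : (1:ℝ)/2 ≤ ∫ x in (0:ℝ)..1, p x := by
      have hlow : ∀ x ∈ Set.Icc (0:ℝ) 1, 1 - ∑ i : Fin n, a i x ≤ p x := by
        intro x _
        have := weier Finset.univ (fun i => a i x)
          (fun i _ => le_max_left _ _)
          (fun i _ => max_le zero_le_one
            (by linarith [mul_nonneg hcpos.le (abs_nonneg (x - t i))]))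
        calc 1 - ∑ i : Fin n, a i x ≤ ∏ i : Fin n, (1 - a i x) := this
        _ = p x := by simp only [hp, hfac]
      have hmono : (∫ x in (0:ℝ)..1, (1 - ∑ i : Fin n, a i x)) ≤ ∫ x in (0:ℝ)..1, p x := by
        apply intervalIntegral.integral_mono_on zero_le_one
        · exact (Continuous.intervalIntegrable (by
            exact continuous_const.sub (continuous_finset_sum _ fun i _ => hacont i)) 0 1)
        · exact hpcont.intervalIntegrable 0 1
        · intro x hx; exact hlow x hx
      have hsum : (∫ x in (0:ℝ)..1, (1 - ∑ i : Fin n, a i x))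
          = 1 - ∑ i : Fin n, ∫ x in (0:ℝ)..1, a i x := by
        have hA : IntervalIntegrable (fun x => ∑ i : Fin n, a i x) volume 0 1 :=
          (continuous_finset_sum _ fun i _ => hacont i).intervalIntegrable 0 1
        rw [intervalIntegral.integral_sub intervalIntegrable_const hA,
          intervalIntegral.integral_finset_sum (fun i _ => (hacont i).intervalIntegrable 0 1)]
        simp
      have hai : ∀ i, (∫ x in (0:ℝ)..1, a i x) ≤ 2 / c := by
        intro i
        have hnn : ∀ x, 0 ≤ a i x := fun x => le_max_left _ _
        have hle : ∀ x, a i x ≤ Set.indicator (Set.Icc (t i - 1/c) (t i + 1/c)) (fun _ => (1:ℝ)) x := by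
          intro x
          by_cases hx : x ∈ Set.Icc (t i - 1/c) (t i + 1/c)
          · rw [Set.indicator_of_mem hx]
            exact max_le zero_le_one
              (by linarith [mul_nonneg hcpos.le (abs_nonneg (x - t i))])
          · rw [Set.indicator_of_notMem hx]
            rw [Set.mem_Icc, not_and_or] at hx
            have h1c : (0:ℝ) < 1/c := by positivity
            have : 1/c < |x - t i| := by
              rcases hx with h | h
              · push_neg at h
                rw [abs_sub_comm, abs_of_pos (by linarith)]; linarith
              · push_neg at h
                rw [abs_of_pos (by linarith)]; linarith
            have : 1 < c * |x - t i| := by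
              rw [div_lt_iff₀ hcpos] at this; linarith
            exact max_le (le_refl 0) (by linarith)
        rw [intervalIntegral.integral_of_le zero_le_one]
        have hindint : IntegrableOn
            (Set.indicator (Set.Icc (t i - 1/c) (t i + 1/c)) (fun _ => (1:ℝ)))
            (Set.Ioc (0:ℝ) 1) := by
          apply MeasureTheory.Integrable.integrableOn
          rw [integrable_indicator_iff measurableSet_Icc]
          exact (integrableOn_const_iff (C := (1:ℝ))).mpr (Or.inr (by simp [Real.volume_Icc]))
        calc (∫ x in Set.Ioc (0:ℝ) 1, a i x)
            ≤ ∫ x in Set.Ioc (0:ℝ) 1,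
              Set.indicator (Set.Icc (t i - 1/c) (t i + 1/c)) (fun _ => (1:ℝ)) x := by
              apply MeasureTheory.setIntegral_mono
                (((hacont i).integrableOn_Icc).mono_set Set.Ioc_subset_Icc_self) hindint
              intro x; exact hle x
          _ ≤ ∫ x, Set.indicator (Set.Icc (t i - 1/c) (t i + 1/c)) (fun _ => (1:ℝ)) x := by
              apply MeasureTheory.setIntegral_le_integral
              · rw [integrable_indicator_iff measurableSet_Icc]
                exact (integrableOn_const_iff (C := (1:ℝ))).mpr (Or.inr (by simp [Real.volume_Icc]))
              · filter_upwards with x using Set.indicator_nonneg (fun _ _ => zero_le_one) x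
          _ = 2 / c := by
              rw [MeasureTheory.integral_indicator measurableSet_Icc]
              simp [Real.volume_Icc]
              rw [max_eq_left (by positivity)]
              ring
      have hsumle : ∑ i : Fin n, (∫ x in (0:ℝ)..1, a i x) ≤ 1/2 := by
        calc ∑ i : Fin n, (∫ x in (0:ℝ)..1, a i x) ≤ ∑ _i : Fin n, 2 / c :=
              Finset.sum_le_sum fun i _ => hai i
          _ = n * (2 / c) := by simp [mul_comm]
          _ = 1/2 := by
              field_simp [hc]
              ring
      linarith [hmono, hsum.symm ▸ hmono]
    have hintf : (∫ x in (0:ℝ)..1, M * p x) = M * ∫ x in (0:ℝ)..1, p x := by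
      exact intervalIntegral.integral_const_mul M p
    rw [hintf, abs_of_nonneg (by
      apply mul_nonneg hM.le
      apply intervalIntegral.integral_nonneg zero_le_one
      intro x _; exact hp0 x)]
    calc M / 2 = M * (1/2) := by ring
    _ ≤ M * ∫ x in (0:ℝ)..1, p x := by nlinarith
end

section
/- The minimal number of function evaluations needed to approximate the integral of every L-Lipschitz function on [0,1] to within ε in the worst case is exactly ⌈L/(4ε)⌉ (for ε < L/4, this number is finite and positive; combining the adversary lower bound L/(4n) with the midpoint rule upper bound). -/
open MeasureTheory Set intervalIntegral
open scoped ENNReal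

section Aux

lemma infDist_integral_lb (n : ℕ) (hn : 0 < n) (t : Fin n → ℝ) :
    1 / (4 * n) ≤ ∫ x in (0:ℝ)..1, Metric.infDist x (Set.range t) := by
  set T : Set ℝ := Set.range t
  have : Nonempty (Fin n) := ⟨⟨0, hn⟩⟩
  have hTne : T.Nonempty := Set.range_nonempty _
  have hTcompact : IsCompact T := (Set.finite_range t).isCompact
  set d : ℝ → ℝ := fun x => Metric.infDist x T with hd
  have hdcont : Continuous d := Metric.continuous_infDist_pt T
  have hdnn : ∀ x, 0 ≤ d x := fun x => Metric.infDist_nonneg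
  set μ : Measure ℝ := volume.restrict (Icc (0:ℝ) 1) with hμ
  have layer : ∫⁻ x, ENNReal.ofReal (d x) ∂μ = ∫⁻ s in Ioi (0:ℝ), μ {x | s < d x} :=
    lintegral_eq_lintegral_meas_lt μ (Filter.Eventually.of_forall hdnn)
      hdcont.aemeasurable
  set c : ℝ := 1 / (2 * n) with hc
  have hcpos : 0 < c := by positivity
  have measLB : ∀ s ∈ Ioc (0:ℝ) c, ENNReal.ofReal (1 - 2 * n * s) ≤ μ {x | s < d x} := by
    intro s hs
    have hcover : Icc (0:ℝ) 1 \ {x | s < d x} ⊆ ⋃ i, Icc (t i - s) (t i + s) := by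
      intro x hx
      have hxd : d x ≤ s := le_of_not_gt hx.2
      obtain ⟨y, hyT, hxy⟩ := hTcompact.exists_infDist_eq_dist hTne x
      obtain ⟨i, rfl⟩ := hyT
      refine Set.mem_iUnion.mpr ⟨i, ?_⟩
      have hds : dist x (t i) ≤ s := hxy ▸ hxd
      have : |x - t i| ≤ s := by rwa [Real.dist_eq] at hds
      constructor <;> [linarith [abs_le.mp this]; linarith [abs_le.mp this]]
    have hmc : volume (⋃ i, Icc (t i - s) (t i + s)) ≤ ENNReal.ofReal (2 * n * s) := by
      calc volume (⋃ i, Icc (t i - s) (t i + s)) ≤ ∑ i : Fin n, volume (Icc (t i - s) (t i + s)) :=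
            measure_iUnion_fintype_le _ _
        _ = ∑ _i : Fin n, ENNReal.ofReal (2 * s) := by
            refine Finset.sum_congr rfl fun i _ => ?_
            rw [Real.volume_Icc]; ring_nf
        _ = ENNReal.ofReal (2 * n * s) := by
            rw [Finset.sum_const, Finset.card_univ, Fintype.card_fin, nsmul_eq_mul,
              ← ENNReal.ofReal_natCast, ← ENNReal.ofReal_mul (by positivity)]
            ring_nf
    have hsplit : (1 : ℝ≥0∞) ≤ μ {x | s < d x} + ENNReal.ofReal (2 * n * s) := by
      have h1 : μ (Icc (0:ℝ) 1) = 1 := by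
        rw [hμ, Measure.restrict_apply_self, Real.volume_Icc]; norm_num
      have h2 : μ (Icc (0:ℝ) 1) ≤ μ {x | s < d x} + μ (Icc (0:ℝ) 1 \ {x | s < d x}) := by
        calc μ (Icc (0:ℝ) 1) ≤ μ ({x | s < d x} ∪ (Icc (0:ℝ) 1 \ {x | s < d x})) := by
              apply measure_mono; intro x hx
              by_cases h : s < d x
              · exact Or.inl h
              · exact Or.inr ⟨hx, h⟩
          _ ≤ _ := measure_union_le _ _
      have h3 : μ (Icc (0:ℝ) 1 \ {x | s < d x}) ≤ ENNReal.ofReal (2 * n * s) := by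
        calc μ (Icc (0:ℝ) 1 \ {x | s < d x}) ≤ volume (Icc (0:ℝ) 1 \ {x | s < d x}) :=
              Measure.restrict_le_self _
          _ ≤ volume (⋃ i, Icc (t i - s) (t i + s)) := measure_mono hcover
          _ ≤ _ := hmc
      calc (1:ℝ≥0∞) = μ (Icc (0:ℝ) 1) := h1.symm
        _ ≤ _ := le_trans h2 (add_le_add le_rfl h3)
    have := tsub_le_iff_right.mpr hsplit
    refine le_trans ?_ this
    rw [← ENNReal.ofReal_one, ← ENNReal.ofReal_sub _ (mul_nonneg (by positivity) hs.1.le)]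
  have step1 : ∫⁻ s in Ioc (0:ℝ) c, ENNReal.ofReal (1 - 2 * n * s)
      ≤ ∫⁻ s in Ioi (0:ℝ), μ {x | s < d x} := by
    calc ∫⁻ s in Ioc (0:ℝ) c, ENNReal.ofReal (1 - 2 * n * s)
        ≤ ∫⁻ s in Ioc (0:ℝ) c, μ {x | s < d x} := by
          apply setLIntegral_mono_ae (μ := volume)
          · apply Measurable.aemeasurable
            apply Antitone.measurable
            intro a b hab
            exact measure_mono fun x hx => lt_of_le_of_lt hab hx
          · exact Filter.Eventually.of_forall measLB
      _ ≤ _ := lintegral_mono_set Ioc_subset_Ioi_self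
  have step2 : ∫⁻ s in Ioc (0:ℝ) c, ENNReal.ofReal (1 - 2 * n * s)
      = ENNReal.ofReal (1 / (4 * n)) := by
    rw [← ofReal_integral_eq_lintegral_ofReal]
    · congr 1
      have h0 : ∫ s in Ioc (0:ℝ) c, (1 - 2 * n * s) = ∫ s in (0:ℝ)..c, (1 - 2 * n * s) := by
        rw [intervalIntegral.integral_of_le hcpos.le]
      rw [h0]
      have h3 : ∫ s in (0:ℝ)..c, (1 - 2 * (n:ℝ) * s) = c - n * c ^ 2 := by
        have h1 : ∫ s in (0:ℝ)..c, (1 - 2 * (n:ℝ) * s)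
            = (∫ s in (0:ℝ)..c, (1:ℝ)) - ∫ s in (0:ℝ)..c, 2 * (n:ℝ) * s :=
          intervalIntegral.integral_sub intervalIntegrable_const
            ((continuous_const.mul continuous_id').intervalIntegrable _ _)
        have h2 : ∫ s in (0:ℝ)..c, 2 * (n:ℝ) * s = 2 * n * (c ^ 2 / 2) := by
          rw [intervalIntegral.integral_const_mul, integral_id]
          ring
        rw [h1, h2, intervalIntegral.integral_const, smul_eq_mul]
        ring
      rw [h3, hc]
      field_simp
      ring
    · apply (continuous_const.sub ((continuous_const.mul continuous_id'))).integrableOn_Ioc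
    · filter_upwards [ae_restrict_mem measurableSet_Ioc] with s hs
      have hnR : (0:ℝ) < n := by exact_mod_cast hn
      have h1 : 2 * (n:ℝ) * s ≤ 2 * n * c := by nlinarith [hs.2]
      have hcval : 2 * (n:ℝ) * c = 1 := by rw [hc]; field_simp
      simp only [Pi.zero_apply]; linarith
  have hInt : IntegrableOn d (Icc (0:ℝ) 1) := hdcont.continuousOn.integrableOn_Icc
  have lhs_eq : ∫⁻ x, ENNReal.ofReal (d x) ∂μ = ENNReal.ofReal (∫ x in Icc (0:ℝ) 1, d x) := by
    rw [← ofReal_integral_eq_lintegral_ofReal hInt (Filter.Eventually.of_forall hdnn)]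
  have final : ENNReal.ofReal (1 / (4 * (n:ℝ))) ≤ ENNReal.ofReal (∫ x in Icc (0:ℝ) 1, d x) := by
    rw [← lhs_eq, layer, ← step2]; exact step1
  have h4 : 1 / (4 * (n:ℝ)) ≤ ∫ x in Icc (0:ℝ) 1, d x := by
    have hnn : 0 ≤ ∫ x in Icc (0:ℝ) 1, d x := integral_nonneg fun x => hdnn x
    exact (ENNReal.ofReal_le_ofReal_iff hnn).mp final
  rw [intervalIntegral.integral_of_le (by norm_num : (0:ℝ) ≤ 1),
    ← integral_Icc_eq_integral_Ioc]
  exact h4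

lemma integral_abs_around_mid (u v : ℝ) (h : u ≤ v) :
    ∫ x in u..v, |x - (u + v) / 2| = (v - u) ^ 2 / 4 := by
  set m : ℝ := (u + v) / 2 with hm
  have hum : u ≤ m := by rw [hm]; linarith
  have hmv : m ≤ v := by rw [hm]; linarith
  have i1 : ∫ x in u..m, |x - m| = (m - u) ^ 2 / 2 := by
    have hcongr : EqOn (fun x => |x - m|) (fun x => m - x) (uIcc u m) := by
      intro x hx
      rw [uIcc_of_le hum] at hx
      simp only
      rw [abs_of_nonpos (by linarith [hx.2])]
      ring
    rw [intervalIntegral.integral_congr hcongr,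
      intervalIntegral.integral_sub intervalIntegrable_const
        (continuous_id'.intervalIntegrable _ _),
      intervalIntegral.integral_const, integral_id, smul_eq_mul]
    ring
  have i2 : ∫ x in m..v, |x - m| = (v - m) ^ 2 / 2 := by
    have hcongr : EqOn (fun x => |x - m|) (fun x => x - m) (uIcc m v) := by
      intro x hx
      rw [uIcc_of_le hmv] at hx
      simp only
      rw [abs_of_nonneg (by linarith [hx.1])]
    rw [intervalIntegral.integral_congr hcongr,
      intervalIntegral.integral_sub (continuous_id'.intervalIntegrable _ _)
        intervalIntegrable_const,
      intervalIntegral.integral_const, integral_id, smul_eq_mul]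
    ring
  have hadd := intervalIntegral.integral_add_adjacent_intervals
    (f := fun x => |x - m|) (μ := volume) (a := u) (b := m) (c := v)
    ((continuous_id'.sub continuous_const).abs.intervalIntegrable _ _)
    ((continuous_id'.sub continuous_const).abs.intervalIntegrable _ _)
  rw [← hadd, i1, i2, hm]
  ring

lemma midpoint_interval {L : ℝ} {f : ℝ → ℝ}
    (hf : ∀ x ∈ Set.Icc (0:ℝ) 1, ∀ y ∈ Set.Icc (0:ℝ) 1, |f x - f y| ≤ L * |x - y|)
    (hfc : ContinuousOn f (Set.Icc (0:ℝ) 1))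
    {u v : ℝ} (hu : 0 ≤ u) (huv : u ≤ v) (hv : v ≤ 1) :
    |(∫ x in u..v, f x) - (v - u) * f ((u + v) / 2)| ≤ L * (v - u) ^ 2 / 4 := by
  set m : ℝ := (u + v) / 2 with hm
  have hmI : m ∈ Icc (0:ℝ) 1 := ⟨by rw [hm]; linarith, by rw [hm]; linarith⟩
  have hsub : Icc u v ⊆ Icc (0:ℝ) 1 := Icc_subset_Icc hu hv
  have hfc' : ContinuousOn f (Icc u v) := hfc.mono hsub
  have hint : IntervalIntegrable f volume u v := by
    rw [intervalIntegrable_iff_integrableOn_Icc_of_le huv]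
    exact hfc'.integrableOn_Icc
  have hconst : (v - u) * f m = ∫ _x in u..v, f m := by
    rw [intervalIntegral.integral_const, smul_eq_mul]
  rw [hconst, ← intervalIntegral.integral_sub hint intervalIntegrable_const]
  have habs : |∫ x in u..v, (f x - f m)| ≤ ∫ x in u..v, |f x - f m| :=
    intervalIntegral.abs_integral_le_integral_abs huv
  refine le_trans habs ?_
  have hmono : ∫ x in u..v, |f x - f m| ≤ ∫ x in u..v, L * |x - m| := by
    apply intervalIntegral.integral_mono_on huv
    · rw [intervalIntegrable_iff_integrableOn_Icc_of_le huv]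
      exact ((hfc'.sub continuousOn_const).abs).integrableOn_Icc
    · exact (continuous_const.mul (continuous_id'.sub continuous_const).abs).intervalIntegrable _ _
    · intro x hx
      exact hf x (hsub hx) m hmI
  refine le_trans hmono ?_
  rw [intervalIntegral.integral_const_mul, hm, integral_abs_around_mid u v huv]
  rw [mul_div_assoc]

lemma midpoint_rule {L : ℝ} {f : ℝ → ℝ} (n : ℕ) (hn : 0 < n)
    (hf : ∀ x ∈ Set.Icc (0:ℝ) 1, ∀ y ∈ Set.Icc (0:ℝ) 1, |f x - f y| ≤ L * |x - y|)
    (hfc : ContinuousOn f (Set.Icc (0:ℝ) 1)) :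
    |(∫ x in (0:ℝ)..1, f x) - (∑ i : Fin n, f ((2 * (i:ℕ) + 1) / (2 * n))) / n|
      ≤ L / (4 * n) := by
  have hnR : (0:ℝ) < n := by exact_mod_cast hn
  set a : ℕ → ℝ := fun k => k / n with ha
  have haIcc : ∀ k, k ≤ n → a k ∈ Icc (0:ℝ) 1 := by
    intro k hk
    refine ⟨by positivity, ?_⟩
    rw [ha]; simp only
    rw [div_le_one hnR]
    exact_mod_cast hk
  have hstep : ∀ k : ℕ, a k ≤ a (k + 1) := by
    intro k
    rw [ha]; simp only
    gcongr
    push_cast; linarith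
  have hIntk : ∀ k, k < n → IntervalIntegrable f volume (a k) (a (k + 1)) := by
    intro k hk
    rw [intervalIntegrable_iff_integrableOn_Icc_of_le (hstep k)]
    exact (hfc.mono (Icc_subset_Icc (haIcc k hk.le).1 (haIcc (k+1) hk).2)).integrableOn_Icc
  have htot : ∑ k ∈ Finset.range n, ∫ x in a k..a (k + 1), f x = ∫ x in (a 0)..(a n), f x :=
    intervalIntegral.sum_integral_adjacent_intervals hIntk
  have ha0 : a 0 = 0 := by simp [ha]
  have han : a n = 1 := by rw [ha]; field_simp
  have hd : ∀ k : ℕ, a (k + 1) - a k = 1 / n := by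
    intro k; rw [ha]; push_cast; ring
  have hmid : ∀ k : ℕ, ((2 * (k:ℝ) + 1)) / (2 * n) = (a k + a (k + 1)) / 2 := by
    intro k; rw [ha]; push_cast; field_simp; ring
  have hsum : (∑ i : Fin n, f ((2 * (i:ℕ) + 1) / (2 * n))) / n
      = ∑ k ∈ Finset.range n, (a (k + 1) - a k) * f ((a k + a (k + 1)) / 2) := by
    rw [Fin.sum_univ_eq_sum_range (fun k => f ((2 * (k:ℝ) + 1) / (2 * n))) n, Finset.sum_div]
    refine Finset.sum_congr rfl fun k _ => ?_
    rw [hmid k, hd k]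
    ring
  have key : (∫ x in (0:ℝ)..1, f x) - (∑ i : Fin n, f ((2 * (i:ℕ) + 1) / (2 * n))) / n
      = ∑ k ∈ Finset.range n,
        ((∫ x in a k..a (k + 1), f x) - (a (k + 1) - a k) * f ((a k + a (k + 1)) / 2)) := by
    rw [Finset.sum_sub_distrib, htot, ha0, han, hsum]
  rw [key]
  have hbound : ∀ k ∈ Finset.range n,
      |(∫ x in a k..a (k + 1), f x) - (a (k + 1) - a k) * f ((a k + a (k + 1)) / 2)|
        ≤ L / (4 * n ^ 2) := by
    intro k hk
    rw [Finset.mem_range] at hk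
    have h := midpoint_interval hf hfc (haIcc k hk.le).1 (hstep k) (haIcc (k+1) hk).2
    refine h.trans (le_of_eq ?_)
    rw [hd k]
    ring
  calc |∑ k ∈ Finset.range n,
        ((∫ x in a k..a (k + 1), f x) - (a (k + 1) - a k) * f ((a k + a (k + 1)) / 2))|
      ≤ ∑ k ∈ Finset.range n,
        |(∫ x in a k..a (k + 1), f x) - (a (k + 1) - a k) * f ((a k + a (k + 1)) / 2)| :=
        Finset.abs_sum_le_sum_abs _ _
    _ ≤ ∑ _k ∈ Finset.range n, L / (4 * n ^ 2) := Finset.sum_le_sum hbound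
    _ = n * (L / (4 * n ^ 2)) := by rw [Finset.sum_const, Finset.card_range, nsmul_eq_mul]
    _ = L / (4 * n) := by field_simp

end Aux

lemma lip_continuousOn {L : ℝ} {f : ℝ → ℝ} (hL : 0 < L)
    (hf : ∀ x ∈ Set.Icc (0:ℝ) 1, ∀ y ∈ Set.Icc (0:ℝ) 1, |f x - f y| ≤ L * |x - y|) :
    ContinuousOn f (Set.Icc (0:ℝ) 1) := by
  have : LipschitzOnWith (Real.toNNReal L) f (Set.Icc (0:ℝ) 1) := by
    rw [lipschitzOnWith_iff_dist_le_mul]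
    intro x hx y hy
    rw [Real.dist_eq, Real.dist_eq]
    calc |f x - f y| ≤ L * |x - y| := hf x hx y hy
      _ ≤ (Real.toNNReal L : ℝ) * |x - y| :=
        mul_le_mul_of_nonneg_right (Real.le_coe_toNNReal L) (abs_nonneg _)
  exact this.continuousOn

theorem stmt_4 (L : ℝ) (hL : 0 < L) (ε : ℝ) (hε : 0 < ε) (hεL : ε < L / 4) :
    IsLeast {n : ℕ |
      ∃ t : Fin n → ℝ, (∀ i, t i ∈ Set.Icc (0:ℝ) 1) ∧
      ∃ φ : (Fin n → ℝ) → ℝ,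
        ∀ f : ℝ → ℝ,
          (∀ x ∈ Set.Icc (0:ℝ) 1, ∀ y ∈ Set.Icc (0:ℝ) 1, |f x - f y| ≤ L * |x - y|) →
          |(∫ x in (0:ℝ)..1, f x) - φ (fun i => f (t i))| ≤ ε}
      ⌈L / (4 * ε)⌉₊ := by
  have hLε : 0 < L / (4 * ε) := by positivity
  have hn₀pos : 0 < ⌈L / (4 * ε)⌉₊ := Nat.ceil_pos.mpr hLε
  set n₀ := ⌈L / (4 * ε)⌉₊ with hn₀
  have hn₀R : (0:ℝ) < n₀ := by exact_mod_cast hn₀pos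
  constructor
  · -- membership: midpoint rule with n₀ points
    refine ⟨fun i => (2 * ((i:ℕ):ℝ) + 1) / (2 * (n₀:ℝ)), ?_, fun v => (∑ i, v i) / (n₀:ℝ), ?_⟩
    · intro i
      constructor
      · positivity
      · rw [div_le_one (by positivity)]
        have h1 : ((i:ℕ):ℝ) + 1 ≤ (n₀:ℝ) := by exact_mod_cast Nat.succ_le_of_lt i.isLt
        linarith
    · intro f hfL
      have hfc := lip_continuousOn hL hfL
      have h := midpoint_rule n₀ hn₀pos hfL hfc
      refine le_trans h ?_
      rw [div_le_iff₀ (by positivity)]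
      have hceil : L / (4 * ε) ≤ (n₀:ℝ) := Nat.le_ceil _
      rw [div_le_iff₀ (by positivity)] at hceil
      linarith
  · -- lower bound
    rintro n ⟨t, ht, φ, hφ⟩
    rw [hn₀, Nat.ceil_le]
    rcases Nat.eq_zero_or_pos n with rfl | hnpos
    · exfalso
      have hconstLip : ∀ c : ℝ,
          ∀ x ∈ Set.Icc (0:ℝ) 1, ∀ y ∈ Set.Icc (0:ℝ) 1,
            |(fun _ : ℝ => c) x - (fun _ : ℝ => c) y| ≤ L * |x - y| := by
        intro c x _ y _
        simp only [sub_self, abs_zero]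
        positivity
      have h1 := hφ (fun _ => 0) (hconstLip 0)
      have h2 := hφ (fun _ => 3 * ε) (hconstLip (3 * ε))
      have e0 : (fun i : Fin 0 => (fun _ : ℝ => (0:ℝ)) (t i))
          = (fun i : Fin 0 => (fun _ : ℝ => 3 * ε) (t i)) := Subsingleton.elim _ _
      rw [e0] at h1
      simp only [intervalIntegral.integral_zero, intervalIntegral.integral_const,
        smul_eq_mul] at h1 h2
      rw [abs_le] at h1 h2
      have := h1.1
      have := h2.2
      nlinarith [h1.1, h1.2, h2.1, h2.2]
    · have hnR : (0:ℝ) < n := by exact_mod_cast hnpos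
      set T : Set ℝ := Set.range t with hT
      set g : ℝ → ℝ := fun x => L * Metric.infDist x T with hg
      have hdist : ∀ x y : ℝ, |Metric.infDist x T - Metric.infDist y T| ≤ |x - y| := by
        intro x y
        have := (Metric.lipschitz_infDist_pt T).dist_le_mul x y
        rw [Real.dist_eq, Real.dist_eq] at this
        simpa using this
      have glip : ∀ x ∈ Set.Icc (0:ℝ) 1, ∀ y ∈ Set.Icc (0:ℝ) 1, |g x - g y| ≤ L * |x - y| := by
        intro x _ y _
        rw [hg]
        simp only
        rw [← mul_sub, abs_mul, abs_of_pos hL]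
        exact mul_le_mul_of_nonneg_left (hdist x y) hL.le
      have gneglip : ∀ x ∈ Set.Icc (0:ℝ) 1, ∀ y ∈ Set.Icc (0:ℝ) 1,
          |(fun z => -g z) x - (fun z => -g z) y| ≤ L * |x - y| := by
        intro x hx y hy
        simp only
        rw [neg_sub_neg, abs_sub_comm]
        exact glip x hx y hy
      have h1 := hφ g glip
      have h2 := hφ (fun z => -g z) gneglip
      have hg0 : ∀ i, g (t i) = 0 := by
        intro i
        rw [hg]
        simp [Metric.infDist_zero_of_mem (s := T) (Set.mem_range_self i)]
      have e1 : (fun i => g (t i)) = (fun _ : Fin n => (0:ℝ)) := funext fun i => hg0 i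
      have e2 : (fun i => (fun z => -g z) (t i)) = (fun _ : Fin n => (0:ℝ)) := by
        funext i; simp [hg0 i]
      rw [e1] at h1
      rw [e2] at h2
      have hgInt : IntervalIntegrable g volume 0 1 :=
        (continuous_const.mul (Metric.continuous_infDist_pt T)).intervalIntegrable _ _
      have hneg : ∫ x in (0:ℝ)..1, (fun z => -g z) x = -∫ x in (0:ℝ)..1, g x := by
        simp only
        exact intervalIntegral.integral_neg
      rw [hneg] at h2
      set I := ∫ x in (0:ℝ)..1, g x with hI
      have hIlb : L / (4 * n) ≤ I := by
        have hlb := infDist_integral_lb n hnpos t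
        calc L / (4 * n) = L * (1 / (4 * n)) := by ring
          _ ≤ L * ∫ x in (0:ℝ)..1, Metric.infDist x T :=
            mul_le_mul_of_nonneg_left hlb hL.le
          _ = I := (intervalIntegral.integral_const_mul L _).symm
      rw [abs_le] at h1 h2
      have hIle : I ≤ ε := by linarith [h1.1, h1.2, h2.1, h2.2]
      have hL4n : L / (4 * n) ≤ ε := le_trans hIlb hIle
      rw [div_le_iff₀ (by positivity)] at hL4n
      rw [div_le_iff₀ (by positivity)]
      linarith
end
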